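/- Let R be a fluid bisimulation between RLFTSs N and N′ with state types S, S′, let H₁,…,Hₙ be R-equivalence classes and a₁,…,aₙ actions, and let H₀ be the R-class of s₀. Then the sum, over all paths e₁,…,eₙ from s₀ such that L(eᵢ) = aᵢ and tgt(eᵢ) ∈ Hᵢ for all 1 ≤ i ≤ n, of the products ∏ᵢ Ω(eᵢ), equals ∏ᵢ RM_{aᵢ}(Hᵢ₋₁, Hᵢ), where RM_a(H, H̃) denotes the common value RM_a(s, H̃) for any s ∈ H (well-defined by the bisimulation condition). -/

import Mathlib

open scoped BigOperators

/-- A rated labeled fluid transition system (RLFTS) over a type `Act` of actions. -/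
structure RLFTS (Act : Type) where
  S : Type
  E : Type
  s0 : S
  src : E → S
  tgt : E → S
  rate : E → ℝ
  label : E → Act
  RP : S → ℝ
  rate_pos : ∀ e, 0 < rate e
  out_finite : ∀ s : S, {e : E | src e = s}.Finite
  out_nonempty : ∀ s : S, ∃ e : E, src e = s

namespace RLFTS

variable {Act : Type}

/-- Exit rate of a state. -/
noncomputable def RE (N : RLFTS Act) (s : N.S) : ℝ :=
  ∑ᶠ e ∈ {e : N.E | N.src e = s}, N.rate e

/-- Average sojourn time in a state. -/
noncomputable def SJ (N : RLFTS Act) (s : N.S) : ℝ := 1 / N.RE s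

/-- Firing probability of an edge. -/
noncomputable def PTe (N : RLFTS Act) (e : N.E) : ℝ := N.rate e / N.RE (N.src e)

/-- `IsPathFrom N M es` : the list of edges `es` is a path starting in the state `M`. -/
def IsPathFrom (N : RLFTS Act) : N.S → List N.E → Prop
  | _, [] => True
  | M, e :: es => N.src e = M ∧ IsPathFrom N (N.tgt e) es

/-- The list of states visited by a path starting in `M`. -/
def visits (N : RLFTS Act) : N.S → List N.E → List N.S
  | M, [] => [M]
  | M, e :: es => M :: visits N (N.tgt e) es

/-- Execution probability of a path. -/
noncomputable def pathPT (N : RLFTS Act) (es : List N.E) : ℝ := (es.map N.PTe).prod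

/-- Cumulative execution probability of the `(σ,ς,ϱ)`-selected paths starting in `M`. -/
noncomputable def PTsel (N : RLFTS Act) (M : N.S) (σ : List Act) (ς ϱ : List ℝ) : ℝ :=
  ∑ᶠ es ∈ {es : List N.E | IsPathFrom N M es ∧ es.map N.label = σ ∧
      (visits N M es).map N.SJ = ς ∧ (visits N M es).map N.RP = ϱ}, N.pathPT es

end RLFTS

namespace RLFTS

variable {Act : Type}

/-- Source map on the disjoint union of the edges of two RLFTSs. -/
def csrc (N N' : RLFTS Act) : N.E ⊕ N'.E → N.S ⊕ N'.S := Sum.map N.src N'.src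

/-- Target map on the disjoint union of the edges of two RLFTSs. -/
def ctgt (N N' : RLFTS Act) : N.E ⊕ N'.E → N.S ⊕ N'.S := Sum.map N.tgt N'.tgt

/-- Rate function on the disjoint union of the edges of two RLFTSs. -/
def crate (N N' : RLFTS Act) : N.E ⊕ N'.E → ℝ := Sum.elim N.rate N'.rate

/-- Labeling on the disjoint union of the edges of two RLFTSs. -/
def clabel (N N' : RLFTS Act) : N.E ⊕ N'.E → Act := Sum.elim N.label N'.label

/-- Fluid-rate function on the disjoint union of the states of two RLFTSs. -/
def cRP (N N' : RLFTS Act) : N.S ⊕ N'.S → ℝ := Sum.elim N.RP N'.RP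

/-- Overall rate to move from the state `s` into the set of states `H` by action `a`,
in the disjoint union of two RLFTSs. -/
noncomputable def RMa (N N' : RLFTS Act) (a : Act) (s : N.S ⊕ N'.S)
    (H : Set (N.S ⊕ N'.S)) : ℝ :=
  ∑ᶠ e ∈ {e : N.E ⊕ N'.E | csrc N N' e = s ∧ clabel N N' e = a ∧ ctgt N N' e ∈ H},
    crate N N' e

/-- `R` is a fluid bisimulation between the RLFTSs `N` and `N'`. -/
def FluidBisim (N N' : RLFTS Act) (R : (N.S ⊕ N'.S) → (N.S ⊕ N'.S) → Prop) : Prop :=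
  Equivalence R ∧ R (Sum.inl N.s0) (Sum.inr N'.s0) ∧
    ∀ s1 s2, R s1 s2 → cRP N N' s1 = cRP N N' s2 ∧
      ∀ (a : Act) (s : N.S ⊕ N'.S), RMa N N' a s1 {v | R s v} = RMa N N' a s2 {v | R s v}

/-- The RLFTSs `N` and `N'` are fluid bisimulation equivalent. -/
def FluidBisimEquiv (N N' : RLFTS Act) : Prop := ∃ R, FluidBisim N N' R

end RLFTS

namespace RLFTSAux

open RLFTS

variable {Act : Type} (N N' : RLFTS Act) (R : (N.S ⊕ N'.S) → (N.S ⊕ N'.S) → Prop)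

/-- The chain product of rates along a sequence of actions/classes. -/
noncomputable def chainProd : (N.S ⊕ N'.S) → List Act → List (N.S ⊕ N'.S) → ℝ
  | _, [], _ => 1
  | _, _ :: _, [] => 1
  | s, a :: as, v :: us => RLFTS.RMa N N' a s {w | R v w} * chainProd v as us

/-- The set of selected paths. -/
def pathSet (M : N.S) (as : List Act) (us : List (N.S ⊕ N'.S)) : Set (List N.E) :=
  {es | RLFTS.IsPathFrom N M es ∧ es.map N.label = as ∧
    List.Forall₂ (fun e v => R v (Sum.inl (N.tgt e))) es us}

/-- First-step edge set. -/
def edgeSet (M : N.S) (a : Act) (v : N.S ⊕ N'.S) : Set N.E :=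
  {e | N.src e = M ∧ N.label e = a ∧ R v (Sum.inl (N.tgt e))}

lemma edgeSet_finite (M : N.S) (a : Act) (v : N.S ⊕ N'.S) :
    (edgeSet N N' R M a v).Finite :=
  (N.out_finite M).subset fun _ h => h.1

lemma pathSet_nil (M : N.S) : pathSet N N' R M [] [] = {([] : List N.E)} := by
  ext es
  constructor
  · rintro ⟨_, hmap, _⟩
    simpa using List.map_eq_nil_iff.mp hmap
  · rintro rfl
    exact ⟨trivial, rfl, List.Forall₂.nil⟩

lemma pathSet_cons (M : N.S) (a : Act) (as : List Act) (v : N.S ⊕ N'.S)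
    (us : List (N.S ⊕ N'.S)) :
    pathSet N N' R M (a :: as) (v :: us) =
      ⋃ e ∈ edgeSet N N' R M a v, (fun es => e :: es) '' pathSet N N' R (N.tgt e) as us := by
  ext es
  constructor
  · rintro ⟨hpath, hmap, hf⟩
    cases es with
    | nil => simp at hmap
    | cons e es' =>
      obtain ⟨hsrc, hpath'⟩ := hpath
      simp only [List.map_cons, List.cons.injEq] at hmap
      rcases hf with _ | ⟨hRv, hf'⟩
      refine Set.mem_biUnion (show e ∈ edgeSet N N' R M a v from ⟨hsrc, hmap.1, hRv⟩) ?_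
      exact ⟨es', ⟨hpath', hmap.2, hf'⟩, rfl⟩
  · intro h
    simp only [Set.mem_iUnion] at h
    obtain ⟨e, he, es', ⟨hpath', hmap', hf'⟩, rfl⟩ := h
    exact ⟨⟨he.1, hpath'⟩, by simp [he.2.1, hmap'], List.Forall₂.cons he.2.2 hf'⟩

lemma pathSet_finite : ∀ (as : List Act) (us : List (N.S ⊕ N'.S)) (M : N.S),
    (pathSet N N' R M as us).Finite := by
  intro as
  induction as with
  | nil =>
    intro us M
    refine (Set.finite_singleton ([] : List N.E)).subset fun es h => ?_
    simpa using List.map_eq_nil_iff.mp h.2.1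
  | cons a as ih =>
    intro us M
    cases us with
    | nil =>
      refine Set.finite_empty.subset fun es h => ?_
      obtain ⟨_, hmap, hf⟩ := h
      cases es with
      | nil => simp at hmap
      | cons e es' => cases hf
    | cons v us =>
      rw [pathSet_cons]
      exact (edgeSet_finite N N' R M a v).biUnion fun e _ => (ih us (N.tgt e)).image _

lemma chainProd_congr (hR : FluidBisim N N' R) :
    ∀ (as : List Act) (us : List (N.S ⊕ N'.S)) (s1 s2 : N.S ⊕ N'.S), R s1 s2 →
      chainProd N N' R s1 as us = chainProd N N' R s2 as us := by
  intro as
  induction as with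
  | nil => intro us s1 s2 _; rfl
  | cons a as ih =>
    intro us s1 s2 h
    cases us with
    | nil => rfl
    | cons v us =>
      show RLFTS.RMa N N' a s1 {w | R v w} * _ = RLFTS.RMa N N' a s2 {w | R v w} * _
      rw [(hR.2.2 s1 s2 h).2 a v]

lemma RMa_inl (a : Act) (M : N.S) (H : Set (N.S ⊕ N'.S)) :
    RLFTS.RMa N N' a (Sum.inl M) H =
      ∑ᶠ e ∈ {e : N.E | N.src e = M ∧ N.label e = a ∧ Sum.inl (N.tgt e) ∈ H}, N.rate e := by
  unfold RLFTS.RMa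
  have hset : {e : N.E ⊕ N'.E | csrc N N' e = Sum.inl M ∧ clabel N N' e = a ∧
      ctgt N N' e ∈ H} =
      Sum.inl '' {e : N.E | N.src e = M ∧ N.label e = a ∧ Sum.inl (N.tgt e) ∈ H} := by
    ext e
    cases e with
    | inl e => simp [csrc, clabel, ctgt]
    | inr e => simp [csrc, clabel, ctgt]
  rw [hset, finsum_mem_image Sum.inl_injective.injOn]
  rfl

lemma sum_pathSet (hR : FluidBisim N N' R) :
    ∀ (as : List Act) (us : List (N.S ⊕ N'.S)), as.length = us.length → ∀ M : N.S,
      (∑ᶠ es ∈ pathSet N N' R M as us, ((es.map N.rate).prod)) =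
        chainProd N N' R (Sum.inl M) as us := by
  intro as
  induction as with
  | nil =>
    intro us hlen M
    obtain rfl : us = [] := List.length_eq_zero_iff.mp hlen.symm
    rw [pathSet_nil, finsum_mem_singleton]
    simp [chainProd]
  | cons a as ih =>
    intro us hlen M
    cases us with
    | nil => simp at hlen
    | cons v us =>
      have hlen' : as.length = us.length := by simpa using hlen
      rw [pathSet_cons]
      have hdisj : (edgeSet N N' R M a v).PairwiseDisjoint
          (fun e => (fun es => e :: es) '' pathSet N N' R (N.tgt e) as us) := by
        intro e _ e' _ hne
        simp only [Function.onFun]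
        rw [Set.disjoint_left]
        rintro es ⟨x, -, rfl⟩ ⟨y, -, hy⟩
        exact hne ((List.cons_eq_cons.mp hy).1.symm)
      rw [finsum_mem_biUnion hdisj (edgeSet_finite N N' R M a v)
        (fun e _ => ((pathSet_finite N N' R as us (N.tgt e)).image _))]
      have hinner : ∀ e ∈ edgeSet N N' R M a v,
          (∑ᶠ es ∈ (fun es => e :: es) '' pathSet N N' R (N.tgt e) as us,
            ((es.map N.rate).prod)) = N.rate e * chainProd N N' R v as us := by
        intro e he
        have hinj : Set.InjOn (fun es => e :: es) (pathSet N N' R (N.tgt e) as us) :=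
          fun x _ y _ h => by simpa using h
        rw [finsum_mem_image hinj]
        have : (∑ᶠ es ∈ pathSet N N' R (N.tgt e) as us,
            (((e :: es).map N.rate).prod)) =
            ∑ᶠ es ∈ pathSet N N' R (N.tgt e) as us, N.rate e * ((es.map N.rate).prod) := by
          apply finsum_mem_congr rfl
          intro es _
          simp
        rw [this]
        have hfin := pathSet_finite N N' R as us (N.tgt e)
        rw [finsum_mem_eq_finite_toFinset_sum _ hfin, ← Finset.mul_sum,
          ← finsum_mem_eq_finite_toFinset_sum _ hfin,
          ih us hlen' (N.tgt e),
          chainProd_congr N N' R hR as us _ v (hR.1.symm he.2.2)]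
      rw [finsum_mem_congr rfl hinner]
      show _ = RLFTS.RMa N N' a (Sum.inl M) {w | R v w} * chainProd N N' R v as us
      rw [RMa_inl, show {e : N.E | N.src e = M ∧ N.label e = a ∧
          Sum.inl (N.tgt e) ∈ {w | R v w}} = edgeSet N N' R M a v from rfl]
      have hfinE := edgeSet_finite N N' R M a v
      rw [finsum_mem_eq_finite_toFinset_sum _ hfinE,
        finsum_mem_eq_finite_toFinset_sum _ hfinE, ← Finset.sum_mul]

lemma chainProd_ofFn (s : N.S ⊕ N'.S) :
    ∀ (n : ℕ) (a : Fin n → Act) (u : Fin n → N.S ⊕ N'.S),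
      chainProd N N' R s (List.ofFn a) (List.ofFn u) =
        ∏ i : Fin n,
          RLFTS.RMa N N' (a i)
            (if _ : (i : ℕ) = 0 then s
              else u ⟨(i : ℕ) - 1, Nat.lt_of_le_of_lt (Nat.sub_le _ _) i.isLt⟩)
            {v | R (u i) v} := by
  intro n
  induction n generalizing s with
  | zero => intro a u; simp [chainProd]
  | succ n ih =>
    intro a u
    rw [List.ofFn_succ, List.ofFn_succ]
    show RLFTS.RMa N N' (a 0) s {w | R (u 0) w} * _ = _
    rw [ih (u 0) (fun i => a i.succ) (fun i => u i.succ), Fin.prod_univ_succ]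
    refine congrArg₂ (fun x y => x * y) ?_ ?_
    · simp
    · apply Finset.prod_congr rfl
      intro i _
      congr 1
      rw [dif_neg (show ((i.succ : Fin (n + 1)) : ℕ) ≠ 0 by simp)]
      split_ifs with hi
      · exact congrArg u (Fin.ext (by simp only [Fin.val_zero, Fin.val_succ]; omega))
      · exact congrArg u (Fin.ext (by simp only [Fin.val_succ]; omega))

end RLFTSAux

/-- Let `R` be a fluid bisimulation between `N` and `N'`, let `H i = {v | R (u i) v}`
(`1 ≤ i ≤ n`) be `R`-equivalence classes given by representatives `u i`, and `a i` actions.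
Then the sum, over all paths `e₁,…,eₙ` from `s₀` with `label eᵢ = aᵢ` and `tgt eᵢ ∈ Hᵢ`,
of the products `∏ᵢ Ω(eᵢ)`, equals `∏ᵢ RM_{aᵢ}(Hᵢ₋₁, Hᵢ)`, where `H₀` is the class of `s₀`
and `RM_a(H,H̃)` is taken at a representative of `H` (well-defined by the bisimulation). -/
theorem RLFTS.bisim_path_rate_product {Act : Type} (N N' : RLFTS Act)
    (R : (N.S ⊕ N'.S) → (N.S ⊕ N'.S) → Prop) (hR : RLFTS.FluidBisim N N' R)
    (n : ℕ) (a : Fin n → Act) (u : Fin n → N.S ⊕ N'.S) :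
    (∑ᶠ es ∈ {es : List N.E | RLFTS.IsPathFrom N N.s0 es ∧ es.map N.label = List.ofFn a ∧
        List.Forall₂ (fun e v => R v (Sum.inl (N.tgt e))) es (List.ofFn u)},
      (es.map N.rate).prod) =
    ∏ i : Fin n,
      RLFTS.RMa N N' (a i)
        (if _ : (i : ℕ) = 0 then Sum.inl N.s0
          else u ⟨(i : ℕ) - 1, Nat.lt_of_le_of_lt (Nat.sub_le _ _) i.isLt⟩)
        {v | R (u i) v} := by
  have h := RLFTSAux.sum_pathSet N N' R hR (List.ofFn a) (List.ofFn u) (by simp) N.s0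
  rw [show {es : List N.E | RLFTS.IsPathFrom N N.s0 es ∧ es.map N.label = List.ofFn a ∧
      List.Forall₂ (fun e v => R v (Sum.inl (N.tgt e))) es (List.ofFn u)} =
      RLFTSAux.pathSet N N' R N.s0 (List.ofFn a) (List.ofFn u) from rfl, h,
    RLFTSAux.chainProd_ofFn N N' R (Sum.inl N.s0) n a u]
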